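/- Under Assumptions (A1) and (A2), for every v ∈ ℝ^N one has ⟨(γ₂I − S₂)⁻¹(γ₁I + S₂)v, v⟩ ≤ (2t − 1)·⟨(γ₂I − S₁)⁻¹(γ₁I + S₁)v, v⟩. -/

import Mathlib

open Matrix

namespace InverseFormCompAux

variable {N : ℕ}

private lemma dot_symm (P : Matrix (Fin N) (Fin N) ℝ) (hP : P.IsHermitian)
    (x y : Fin N → ℝ) : x ⬝ᵥ (P *ᵥ y) = (P *ᵥ x) ⬝ᵥ y := by
  have hPt : Pᵀ = P := by
    rw [← conjTranspose_eq_transpose_of_trivial]; exact hP.eq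
  rw [dotProduct_mulVec, ← mulVec_transpose, hPt]

private lemma cs_ineq {P : Matrix (Fin N) (Fin N) ℝ} (hP : P.PosSemidef) (x y : Fin N → ℝ) :
    (x ⬝ᵥ (P *ᵥ y))^2 ≤ (x ⬝ᵥ (P *ᵥ x)) * (y ⬝ᵥ (P *ᵥ y)) := by
  have hsym : y ⬝ᵥ (P *ᵥ x) = x ⬝ᵥ (P *ᵥ y) := by
    rw [dot_symm P hP.1 y x, dotProduct_comm]
  have key : ∀ r : ℝ, 0 ≤ (y ⬝ᵥ (P *ᵥ y)) * (r * r) + (2 * (x ⬝ᵥ (P *ᵥ y))) * r + (x ⬝ᵥ (P *ᵥ x)) := by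
    intro r
    have h0 := hP.dotProduct_mulVec_nonneg (x + r • y)
    rw [star_trivial] at h0
    have e : (x + r • y) ⬝ᵥ (P *ᵥ (x + r • y))
        = (y ⬝ᵥ (P *ᵥ y)) * (r * r) + (2 * (x ⬝ᵥ (P *ᵥ y))) * r + (x ⬝ᵥ (P *ᵥ x)) := by
      rw [mulVec_add, mulVec_smul, dotProduct_add, add_dotProduct, add_dotProduct,
        dotProduct_smul, smul_dotProduct, smul_dotProduct, dotProduct_smul]
      simp only [smul_eq_mul, hsym]
      ring
    linarith [e ▸ h0]
  have hd := discrim_le_zero key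
  simp only [discrim] at hd
  nlinarith [hd]

/-- Loewner inverse antitonicity with a scalar, via Cauchy–Schwarz. -/
private lemma inv_form_antitone_smul {P Q : Matrix (Fin N) (Fin N) ℝ}
    (hP : P.PosDef) (hQ : Q.PosDef) (t : ℝ) (ht : 0 < t)
    (h : ∀ u, t * ((P *ᵥ u) ⬝ᵥ u) ≤ (Q *ᵥ u) ⬝ᵥ u) (v : Fin N → ℝ) :
    t * ((Q⁻¹ *ᵥ v) ⬝ᵥ v) ≤ (P⁻¹ *ᵥ v) ⬝ᵥ v := by
  set x := Q⁻¹ *ᵥ v with hx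
  set y := P⁻¹ *ᵥ v with hy
  have hQx : Q *ᵥ x = v := by
    rw [hx, mulVec_mulVec, mul_nonsing_inv _ hQ.det_pos.ne'.isUnit, one_mulVec]
  have hPy : P *ᵥ y = v := by
    rw [hy, mulVec_mulVec, mul_nonsing_inv _ hP.det_pos.ne'.isUnit, one_mulVec]
  have hq0 : 0 ≤ x ⬝ᵥ v := by
    have h0 := hQ.posSemidef.dotProduct_mulVec_nonneg x
    rw [star_trivial, hQx] at h0; exact h0
  have hr0 : 0 ≤ y ⬝ᵥ v := by
    have h0 := hP.posSemidef.dotProduct_mulVec_nonneg y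
    rw [star_trivial, hPy] at h0; exact h0
  have hxv : x ⬝ᵥ (P *ᵥ y) = x ⬝ᵥ v := by rw [hPy]
  have hcs := cs_ineq hP.posSemidef x y
  rw [hxv, hPy] at hcs
  -- hcs : (x ⬝ᵥ v)^2 ≤ (x ⬝ᵥ (P *ᵥ x)) * (y ⬝ᵥ v)
  have h1 : t * (x ⬝ᵥ (P *ᵥ x)) ≤ x ⬝ᵥ v := by
    have h2 := h x
    rw [dotProduct_comm x (P *ᵥ x)]
    calc t * ((P *ᵥ x) ⬝ᵥ x) ≤ (Q *ᵥ x) ⬝ᵥ x := h2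
      _ = x ⬝ᵥ v := by rw [hQx, dotProduct_comm]
  have hxPx : 0 ≤ x ⬝ᵥ (P *ᵥ x) := by
    have h0 := hP.posSemidef.dotProduct_mulVec_nonneg x
    rw [star_trivial] at h0; exact h0
  rcases eq_or_lt_of_le hq0 with he | hlt
  · have : x ⬝ᵥ v = 0 := he.symm
    rw [this, mul_zero]; exact hr0
  · -- t*(x⬝ᵥv)² ≤ t*xPx*(y⬝ᵥv) ≤ (x⬝ᵥv)*(y⬝ᵥv)
    have h3 : t * (x ⬝ᵥ (P *ᵥ x)) * (y ⬝ᵥ v) ≤ (x ⬝ᵥ v) * (y ⬝ᵥ v) :=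
      mul_le_mul_of_nonneg_right h1 hr0
    nlinarith [hcs, hlt, ht]

private lemma mulVec_dot (U : Matrix (Fin N) (Fin N) ℝ) (a v : Fin N → ℝ) :
    (U *ᵥ a) ⬝ᵥ v = a ⬝ᵥ (Uᵀ *ᵥ v) := by
  rw [dotProduct_comm, dotProduct_mulVec, ← mulVec_transpose, dotProduct_comm]

private lemma diag_form (U : Matrix (Fin N) (Fin N) ℝ) (d : Fin N → ℝ) (v : Fin N → ℝ) :
    ((U * diagonal d * star U) *ᵥ v) ⬝ᵥ v = ∑ i, d i * ((star U *ᵥ v) i)^2 := by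
  have hsU : star U = Uᵀ := by
    rw [star_eq_conjTranspose, conjTranspose_eq_transpose_of_trivial]
  rw [hsU, ← mulVec_mulVec, ← mulVec_mulVec, mulVec_dot]
  simp only [dotProduct, mulVec_diagonal]
  exact Finset.sum_congr rfl fun i _ => by ring

variable {S : Matrix (Fin N) (Fin N) ℝ}

private lemma spec_repr (hH : S.IsHermitian) (α : ℝ) :
    α • (1 : Matrix (Fin N) (Fin N) ℝ) - S =
      (hH.eigenvectorUnitary : Matrix (Fin N) (Fin N) ℝ) *
        diagonal (fun i => α - hH.eigenvalues i) *
        star (hH.eigenvectorUnitary : Matrix (Fin N) (Fin N) ℝ) := by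
  set U := (hH.eigenvectorUnitary : Matrix (Fin N) (Fin N) ℝ) with hUdef
  have hU2 : U * star U = 1 := (Matrix.mem_unitaryGroup_iff).mp hH.eigenvectorUnitary.2
  have hdiag : diagonal (fun i => α - hH.eigenvalues i)
      = α • (1 : Matrix (Fin N) (Fin N) ℝ) - diagonal (RCLike.ofReal ∘ hH.eigenvalues) := by
    ext i j
    rcases eq_or_ne i j with rfl | hij
    · simp [Matrix.diagonal_apply_eq, Matrix.one_apply_eq]
    · simp [Matrix.diagonal_apply_ne _ hij, Matrix.one_apply_ne hij]
  rw [hdiag, Matrix.mul_sub, Matrix.sub_mul, show U * diagonal (RCLike.ofReal ∘ hH.eigenvalues) * star U = S from hH.spectral_theorem.symm]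
  congr 1
  rw [Matrix.mul_smul, mul_one, Matrix.smul_mul, hU2]

private lemma spec_inv (hH : S.IsHermitian) (α : ℝ) (hne : ∀ i, α - hH.eigenvalues i ≠ 0) :
    (α • (1 : Matrix (Fin N) (Fin N) ℝ) - S)⁻¹ =
      (hH.eigenvectorUnitary : Matrix (Fin N) (Fin N) ℝ) *
        diagonal (fun i => (α - hH.eigenvalues i)⁻¹) *
        star (hH.eigenvectorUnitary : Matrix (Fin N) (Fin N) ℝ) := by
  set U := (hH.eigenvectorUnitary : Matrix (Fin N) (Fin N) ℝ) with hUdef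
  have hU1 : star U * U = 1 := (Matrix.mem_unitaryGroup_iff').mp hH.eigenvectorUnitary.2
  have hU2 : U * star U = 1 := (Matrix.mem_unitaryGroup_iff).mp hH.eigenvectorUnitary.2
  apply inv_eq_right_inv
  rw [spec_repr hH α]
  have hmid : ∀ X : Matrix (Fin N) (Fin N) ℝ, star U * (U * X) = X := fun X => by
    rw [← mul_assoc, hU1, one_mul]
  simp only [mul_assoc]
  rw [hmid]
  rw [← mul_assoc (diagonal fun i => α - hH.eigenvalues i), diagonal_mul_diagonal]
  have : (fun i => (α - hH.eigenvalues i) * (α - hH.eigenvalues i)⁻¹) = fun _ => (1:ℝ) := by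
    funext i; exact mul_inv_cancel₀ (hne i)
  rw [this, diagonal_one, one_mul, hU2]

private lemma spec_posdef (hH : S.IsHermitian) (α : ℝ)
    (hpos : ∀ i, 0 < α - hH.eigenvalues i) :
    (α • (1 : Matrix (Fin N) (Fin N) ℝ) - S).PosDef := by
  set U := (hH.eigenvectorUnitary : Matrix (Fin N) (Fin N) ℝ) with hUdef
  have hU2 : U * star U = 1 := (Matrix.mem_unitaryGroup_iff).mp hH.eigenvectorUnitary.2
  rw [posDef_iff_dotProduct_mulVec]
  constructor
  · show (α • (1 : Matrix (Fin N) (Fin N) ℝ) - S)ᴴ = _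
    rw [conjTranspose_sub, conjTranspose_smul, conjTranspose_one, hH.eq, star_trivial]
  · intro v hv
    rw [star_trivial, dotProduct_comm, spec_repr hH α, diag_form]
    have hw : star U *ᵥ v ≠ 0 := by
      intro h0
      apply hv
      have hv2 : U *ᵥ (star U *ᵥ v) = v := by rw [mulVec_mulVec, hU2, one_mulVec]
      rw [h0, mulVec_zero] at hv2
      exact hv2.symm
    obtain ⟨i0, hi0⟩ := Function.ne_iff.mp hw
    refine Finset.sum_pos' (fun i _ => mul_nonneg (hpos i).le (sq_nonneg _)) ⟨i0, Finset.mem_univ _, ?_⟩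
    have : (0:ℝ) < ((star U *ᵥ v) i0)^2 :=
      lt_of_le_of_ne (sq_nonneg _) (Ne.symm (pow_ne_zero 2 hi0))
    exact mul_pos (hpos i0) this

private lemma scalar_key {γ1 γ2 t m : ℝ} (hγ1 : 0 < γ1) (ht : 1 ≤ t)
    (h1 : γ1 ≤ m) (h2 : 3*m ≤ γ2) :
    (γ1+γ2) * (γ2 - m)⁻¹ + (2*t - 2) ≤ (2*t-1) * ((γ1+γ2)*t) * (t*γ2 - m)⁻¹ := by
  have hm : 0 < m := hγ1.trans_le h1
  have hd1 : 0 < γ2 - m := by linarith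
  have hd2 : 0 < t*γ2 - m := by nlinarith
  have hu : 0 ≤ m - γ1 := by linarith
  have hw : 0 ≤ γ2 - 3*m := by linarith
  have hτ : 0 ≤ t - 1 := by linarith
  have hg : 0 ≤ γ1 := hγ1.le
  have key : 0 ≤ (2*t-1) * ((γ1+γ2)*t) * (γ2-m)
      - ((γ1+γ2) + (2*t-2)*(γ2-m)) * (t*γ2-m) := by
    nlinarith [mul_nonneg (mul_nonneg hu hw) hτ, mul_nonneg (mul_nonneg hu hu) hτ,
      mul_nonneg (mul_nonneg hg hw) hτ, mul_nonneg (mul_nonneg (mul_nonneg hg hw) hτ) hτ,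
      mul_nonneg (mul_nonneg hg hu) hτ, mul_nonneg (mul_nonneg (mul_nonneg hg hu) hτ) hτ,
      mul_nonneg (mul_nonneg hg hg) hτ, mul_nonneg (mul_nonneg (mul_nonneg hg hg) hτ) hτ]
  have expand : (2*t-1) * ((γ1+γ2)*t) * (t*γ2 - m)⁻¹ - ((γ1+γ2) * (γ2 - m)⁻¹ + (2*t - 2))
      = ((2*t-1) * ((γ1+γ2)*t) * (γ2-m) - ((γ1+γ2) + (2*t-2)*(γ2-m)) * (t*γ2-m))
        / ((γ2-m)*(t*γ2-m)) := by
    field_simp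
  have : 0 ≤ (2*t-1) * ((γ1+γ2)*t) * (t*γ2 - m)⁻¹ - ((γ1+γ2) * (γ2 - m)⁻¹ + (2*t - 2)) := by
    rw [expand]
    exact div_nonneg key (by positivity)
  linarith

end InverseFormCompAux

open InverseFormCompAux

/-- under Assumptions (A1) and (A2), for every `v ∈ ℝ^N` one has
`⟨(γ₂I - S₂)⁻¹(γ₁I + S₂)v, v⟩ ≤ (2t - 1)·⟨(γ₂I - S₁)⁻¹(γ₁I + S₁)v, v⟩`. -/
theorem inverse_form_comparison (N : ℕ) (hN : 1 ≤ N)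
    (S1 S2 : Matrix (Fin N) (Fin N) ℝ) (hS1 : S1.PosDef) (hS2 : S2.PosDef)
    (lmin1 lmax1 lmin2 lmax2 : ℝ)
    (hlmin1 : IsLeast (Set.range hS1.isHermitian.eigenvalues) lmin1)
    (hlmax1 : IsGreatest (Set.range hS1.isHermitian.eigenvalues) lmax1)
    (hlmin2 : IsLeast (Set.range hS2.isHermitian.eigenvalues) lmin2)
    (hlmax2 : IsGreatest (Set.range hS2.isHermitian.eigenvalues) lmax2)
    (s t : ℝ) (hs : 0 < s) (hs1 : s ≤ 1) (ht : 1 ≤ t)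
    (hA1 : ∀ v : Fin N → ℝ,
      s * ((S1 *ᵥ v) ⬝ᵥ v) ≤ (S2 *ᵥ v) ⬝ᵥ v ∧ (S2 *ᵥ v) ⬝ᵥ v ≤ t * ((S1 *ᵥ v) ⬝ᵥ v))
    (γ1 γ2 : ℝ) (hγ1 : 0 < γ1) (hγ1' : γ1 ≤ min lmin1 lmin2)
    (hγ2 : 3 * max lmax1 lmax2 ≤ γ2) :
    ∀ v : Fin N → ℝ,
      (((γ2 • (1 : Matrix (Fin N) (Fin N) ℝ) - S2)⁻¹ *
          (γ1 • (1 : Matrix (Fin N) (Fin N) ℝ) + S2)) *ᵥ v) ⬝ᵥ v ≤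
        (2 * t - 1) *
          ((((γ2 • (1 : Matrix (Fin N) (Fin N) ℝ) - S1)⁻¹ *
            (γ1 • (1 : Matrix (Fin N) (Fin N) ℝ) + S1)) *ᵥ v) ⬝ᵥ v) := by
  intro v
  have hH1 := hS1.isHermitian
  have hH2 := hS2.isHermitian
  -- eigenvalue bounds
  have hμ1l : ∀ i, γ1 ≤ hH1.eigenvalues i := fun i =>
    le_trans (le_trans hγ1' (min_le_left _ _)) (hlmin1.2 (Set.mem_range_self i))
  have hμ1u : ∀ i, 3 * hH1.eigenvalues i ≤ γ2 := fun i => by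
    have h1 : hH1.eigenvalues i ≤ lmax1 := hlmax1.2 (Set.mem_range_self i)
    have h2 : lmax1 ≤ max lmax1 lmax2 := le_max_left _ _
    linarith
  have hμ2l : ∀ i, γ1 ≤ hH2.eigenvalues i := fun i =>
    le_trans (le_trans hγ1' (min_le_right _ _)) (hlmin2.2 (Set.mem_range_self i))
  have hμ2u : ∀ i, 3 * hH2.eigenvalues i ≤ γ2 := fun i => by
    have h1 : hH2.eigenvalues i ≤ lmax2 := hlmax2.2 (Set.mem_range_self i)
    have h2 : lmax2 ≤ max lmax1 lmax2 := le_max_right _ _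
    linarith
  have i0 : Fin N := ⟨0, hN⟩
  have hγ2pos : 0 < γ2 := by
    have := hμ1l i0; have := hμ1u i0; linarith
  have ht0 : 0 < t := lt_of_lt_of_le one_pos ht
  have htγ2 : γ2 ≤ t * γ2 := le_mul_of_one_le_left hγ2pos.le ht
  -- positive definiteness
  have hApos : (γ2 • (1 : Matrix (Fin N) (Fin N) ℝ) - S1).PosDef :=
    spec_posdef hH1 γ2 (fun i => by have := hμ1l i; have := hμ1u i; linarith)
  have hBpos : (γ2 • (1 : Matrix (Fin N) (Fin N) ℝ) - S2).PosDef :=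
    spec_posdef hH2 γ2 (fun i => by have := hμ2l i; have := hμ2u i; linarith)
  have hCpos : ((t * γ2) • (1 : Matrix (Fin N) (Fin N) ℝ) - S2).PosDef :=
    spec_posdef hH2 (t * γ2) (fun i => by have := hμ2l i; have := hμ2u i; linarith)
  -- rewrite the two goal matrices
  have hBid : (γ2 • (1 : Matrix (Fin N) (Fin N) ℝ) - S2)⁻¹ *
      (γ1 • (1 : Matrix (Fin N) (Fin N) ℝ) + S2)
      = (γ1 + γ2) • (γ2 • (1 : Matrix (Fin N) (Fin N) ℝ) - S2)⁻¹ - 1 := by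
    have h : γ1 • (1 : Matrix (Fin N) (Fin N) ℝ) + S2
        = (γ1 + γ2) • (1 : Matrix (Fin N) (Fin N) ℝ)
          - (γ2 • (1 : Matrix (Fin N) (Fin N) ℝ) - S2) := by
      module
    rw [h, Matrix.mul_sub, Matrix.mul_smul, mul_one,
      Matrix.nonsing_inv_mul _ hBpos.det_pos.ne'.isUnit]
  have hAid : (γ2 • (1 : Matrix (Fin N) (Fin N) ℝ) - S1)⁻¹ *
      (γ1 • (1 : Matrix (Fin N) (Fin N) ℝ) + S1)
      = (γ1 + γ2) • (γ2 • (1 : Matrix (Fin N) (Fin N) ℝ) - S1)⁻¹ - 1 := by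
    have h : γ1 • (1 : Matrix (Fin N) (Fin N) ℝ) + S1
        = (γ1 + γ2) • (1 : Matrix (Fin N) (Fin N) ℝ)
          - (γ2 • (1 : Matrix (Fin N) (Fin N) ℝ) - S1) := by
      module
    rw [h, Matrix.mul_sub, Matrix.mul_smul, mul_one,
      Matrix.nonsing_inv_mul _ hApos.det_pos.ne'.isUnit]
  have hform : ∀ (M : Matrix (Fin N) (Fin N) ℝ) (c : ℝ),
      (((c • M - 1) *ᵥ v) ⬝ᵥ v) = c * ((M *ᵥ v) ⬝ᵥ v) - v ⬝ᵥ v := by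
    intro M c
    rw [sub_mulVec, smul_mulVec, one_mulVec, sub_dotProduct, smul_dotProduct, smul_eq_mul]
  rw [hBid, hAid, hform, hform]
  -- spectral forms for S2
  set U2 := (hH2.eigenvectorUnitary : Matrix (Fin N) (Fin N) ℝ) with hU2def
  have hU2unit : U2 * star U2 = 1 := (Matrix.mem_unitaryGroup_iff).mp hH2.eigenvectorUnitary.2
  set w := star U2 *ᵥ v with hwdef
  have e1 : ((γ2 • (1 : Matrix (Fin N) (Fin N) ℝ) - S2)⁻¹ *ᵥ v) ⬝ᵥ v
      = ∑ i, (γ2 - hH2.eigenvalues i)⁻¹ * (w i)^2 := by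
    rw [spec_inv hH2 γ2 (fun i => ne_of_gt (by have := hμ2l i; have := hμ2u i; linarith))]
    exact diag_form U2 _ v
  have e2 : (((t * γ2) • (1 : Matrix (Fin N) (Fin N) ℝ) - S2)⁻¹ *ᵥ v) ⬝ᵥ v
      = ∑ i, (t * γ2 - hH2.eigenvalues i)⁻¹ * (w i)^2 := by
    rw [spec_inv hH2 (t * γ2) (fun i => ne_of_gt (by have := hμ2l i; have := hμ2u i; linarith))]
    exact diag_form U2 _ v
  have e3 : v ⬝ᵥ v = ∑ i, (w i)^2 := by
    have h1 : U2 * diagonal (fun _ => (1:ℝ)) * star U2 = 1 := by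
      rw [diagonal_one, mul_one, hU2unit]
    have h2 := diag_form U2 (fun _ => (1:ℝ)) v
    rw [h1, one_mulVec] at h2
    simpa using h2
  -- step 1 : spectral scalar inequality
  have step1 : (γ1 + γ2) * (((γ2 • (1 : Matrix (Fin N) (Fin N) ℝ) - S2)⁻¹ *ᵥ v) ⬝ᵥ v)
      + (2*t - 2) * (v ⬝ᵥ v)
      ≤ ((2*t - 1) * ((γ1 + γ2) * t))
        * ((((t * γ2) • (1 : Matrix (Fin N) (Fin N) ℝ) - S2)⁻¹ *ᵥ v) ⬝ᵥ v) := by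
    rw [e1, e2, e3, Finset.mul_sum, Finset.mul_sum, Finset.mul_sum, ← Finset.sum_add_distrib]
    apply Finset.sum_le_sum
    intro i _
    have hk := scalar_key hγ1 ht (hμ2l i) (hμ2u i)
    calc (γ1 + γ2) * ((γ2 - hH2.eigenvalues i)⁻¹ * (w i)^2) + (2*t - 2) * (w i)^2
        = ((γ1 + γ2) * (γ2 - hH2.eigenvalues i)⁻¹ + (2*t - 2)) * (w i)^2 := by ring
      _ ≤ ((2*t-1) * ((γ1+γ2)*t) * (t*γ2 - hH2.eigenvalues i)⁻¹) * (w i)^2 :=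
          mul_le_mul_of_nonneg_right hk (sq_nonneg _)
      _ = (2*t - 1) * ((γ1 + γ2) * t) * ((t * γ2 - hH2.eigenvalues i)⁻¹ * (w i)^2) := by ring
  -- step 2 : inverse antitonicity from A1
  have step2 : t * ((((t * γ2) • (1 : Matrix (Fin N) (Fin N) ℝ) - S2)⁻¹ *ᵥ v) ⬝ᵥ v)
      ≤ ((γ2 • (1 : Matrix (Fin N) (Fin N) ℝ) - S1)⁻¹ *ᵥ v) ⬝ᵥ v := by
    apply inv_form_antitone_smul hApos hCpos t ht0 (fun u => ?_) v
    have h2 := (hA1 u).2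
    rw [sub_mulVec, sub_mulVec, smul_mulVec, smul_mulVec, one_mulVec,
      sub_dotProduct, sub_dotProduct, smul_dotProduct, smul_dotProduct, smul_eq_mul, smul_eq_mul]
    linarith
  -- combine
  have hcpos : (0:ℝ) ≤ (2*t - 1) * (γ1 + γ2) := by nlinarith
  have step2' : ((2*t - 1) * ((γ1 + γ2) * t))
      * ((((t * γ2) • (1 : Matrix (Fin N) (Fin N) ℝ) - S2)⁻¹ *ᵥ v) ⬝ᵥ v)
      ≤ ((2*t - 1) * (γ1 + γ2)) * (((γ2 • (1 : Matrix (Fin N) (Fin N) ℝ) - S1)⁻¹ *ᵥ v) ⬝ᵥ v) := by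
    have := mul_le_mul_of_nonneg_left step2 hcpos
    calc ((2*t - 1) * ((γ1 + γ2) * t))
        * ((((t * γ2) • (1 : Matrix (Fin N) (Fin N) ℝ) - S2)⁻¹ *ᵥ v) ⬝ᵥ v)
        = ((2*t - 1) * (γ1 + γ2)) * (t * ((((t * γ2) • (1 : Matrix (Fin N) (Fin N) ℝ) - S2)⁻¹ *ᵥ v) ⬝ᵥ v)) := by ring
      _ ≤ _ := this
  linarith
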